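/- Let (μ, W) be a matrix weight with all moments finite, and let (P_n) be a monic orthogonal family for (μ, W) such that each squared norm H_n = ∫ P_n(x) W(x) P_n(x)* dμ(x) is positive definite. Then for every T ∈ 𝒜 and every n ∈ ℕ, T H_n = H_n T*. -/

import Mathlib

open Matrix MeasureTheory ComplexOrder

attribute [local instance] Matrix.normedAddCommGroup Matrix.normedSpace

/-- The evaluation at `x` of the matrix polynomial with coefficients `C 0, …, C n`. -/
noncomputable def matrixPolyEval (N : ℕ) (C : ℕ → Matrix (Fin N) (Fin N) ℂ) (n : ℕ)
    (x : ℂ) : Matrix (Fin N) (Fin N) ℂ :=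
  ∑ k ∈ Finset.range (n + 1), x ^ k • C k

/-- Left-right multiplication `X ↦ A * X * B` as a continuous linear map. -/
noncomputable def lrCLM (N : ℕ) (A B : Matrix (Fin N) (Fin N) ℂ) :
    Matrix (Fin N) (Fin N) ℂ →L[ℂ] Matrix (Fin N) (Fin N) ℂ :=
  LinearMap.toContinuousLinearMap
  { toFun := fun X => A * X * B
    map_add' := fun X Y => by rw [mul_add, add_mul]
    map_smul' := fun c X => by simp [mul_smul_comm, smul_mul_assoc] }

@[simp] lemma lrCLM_apply (N : ℕ) (A B X : Matrix (Fin N) (Fin N) ℂ) :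
    lrCLM N A B X = A * X * B := rfl

/-- Any left-coefficient matrix polynomial of degree `< m` is a left combination of the
monic polynomials `P_0, …, P_{m-1}`. -/
lemma span_lemma (N : ℕ) (Pc : ℕ → ℕ → Matrix (Fin N) (Fin N) ℂ)
    (hmonic : ∀ n, Pc n n = 1) :
    ∀ (m : ℕ) (A : ℕ → Matrix (Fin N) (Fin N) ℂ),
      ∃ B : ℕ → Matrix (Fin N) (Fin N) ℂ,
      ∀ x : ℂ, ∑ k ∈ Finset.range m, x ^ k • A k
        = ∑ k ∈ Finset.range m, B k * matrixPolyEval N (Pc k) k x := by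
  intro m
  induction m with
  | zero => exact fun A => ⟨0, by simp⟩
  | succ m ih =>
    intro A
    obtain ⟨B', hB'⟩ := ih (fun k => A k - A m * Pc m k)
    refine ⟨fun k => if k = m then A m else B' k, fun x => ?_⟩
    rw [Finset.sum_range_succ, Finset.sum_range_succ]
    have h1 : ∑ k ∈ Finset.range m,
        (if k = m then A m else B' k) * matrixPolyEval N (Pc k) k x
        = ∑ k ∈ Finset.range m, B' k * matrixPolyEval N (Pc k) k x :=
      Finset.sum_congr rfl fun k hk => by
        rw [if_neg (Nat.ne_of_lt (Finset.mem_range.mp hk))]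
    rw [h1, show (fun k => if k = m then A m else B' k) m = A m from by simp, ← hB']
    have h2 : A m * matrixPolyEval N (Pc m) m x
        = (∑ k ∈ Finset.range m, x ^ k • (A m * Pc m k)) + x ^ m • A m := by
      rw [matrixPolyEval, Finset.mul_sum, Finset.sum_range_succ, hmonic]
      simp [mul_smul_comm]
    rw [h2]
    simp only [smul_sub, Finset.sum_sub_distrib]
    abel

lemma integrable_prod (N : ℕ) (μ : Measure ℝ) (W : ℝ → Matrix (Fin N) (Fin N) ℂ)
    (hmom : ∀ n : ℕ, @Integrable _ _ SeminormedAddGroup.toContinuousENorm _ _ (fun x : ℝ => (x : ℂ) ^ n • W x) μ)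
    (A B : ℕ → Matrix (Fin N) (Fin N) ℂ) (a b : ℕ) :
    @Integrable _ _ SeminormedAddGroup.toContinuousENorm _ _ (fun x : ℝ => (∑ i ∈ Finset.range a, (x : ℂ) ^ i • A i) * W x *
      (∑ j ∈ Finset.range b, (x : ℂ) ^ j • B j)ᴴ) μ := by
  have heq : (fun x : ℝ => (∑ i ∈ Finset.range a, (x : ℂ) ^ i • A i) * W x *
      (∑ j ∈ Finset.range b, (x : ℂ) ^ j • B j)ᴴ)
      = fun x : ℝ => ∑ i ∈ Finset.range a, ∑ j ∈ Finset.range b,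
        lrCLM N (A i) ((B j)ᴴ) (((x : ℂ) ^ (i + j)) • W x) := by
    funext x
    rw [Matrix.conjTranspose_sum]
    simp only [Matrix.conjTranspose_smul, star_pow, Complex.star_def, Complex.conj_ofReal]
    rw [Finset.sum_mul, Finset.sum_mul]
    refine Finset.sum_congr rfl fun i _ => ?_
    rw [Finset.mul_sum]
    refine Finset.sum_congr rfl fun j _ => ?_
    simp only [lrCLM_apply, smul_mul_assoc, mul_smul_comm, smul_smul, pow_add]
    ring_nf
  rw [heq]
  exact integrable_finset_sum _ fun i _ => integrable_finset_sum _ fun j _ =>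
    (lrCLM N (A i) ((B j)ᴴ)).integrable_comp (hmom (i + j))

/-- For a matrix weight with all moments finite and a monic orthogonal family `(P_n)`
with positive definite squared norms `H_n`, every `T ∈ 𝒜` satisfies `T H_n = H_n Tᴴ`. -/
theorem T_mul_Hn_eq_Hn_mul_Tstar (N : ℕ) (hN : 1 ≤ N)
    (μ : Measure ℝ) [SigmaFinite μ]
    (W : ℝ → Matrix (Fin N) (Fin N) ℂ)
    (hWmeas : ∀ i j, Measurable fun x => W x i j)
    (hWpos : ∀ᵐ x ∂μ, (W x).PosDef)
    (hmom : ∀ n : ℕ, @Integrable _ _ SeminormedAddGroup.toContinuousENorm _ _ (fun x : ℝ => (x : ℂ) ^ n • W x) μ)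
    (Pc : ℕ → ℕ → Matrix (Fin N) (Fin N) ℂ)
    (hmonic : ∀ n, Pc n n = 1)
    (horth : ∀ n m, n ≠ m →
      (∫ x : ℝ, matrixPolyEval N (Pc n) n (x : ℂ) * W x *
        (matrixPolyEval N (Pc m) m (x : ℂ))ᴴ ∂μ) = 0)
    (H : ℕ → Matrix (Fin N) (Fin N) ℂ)
    (hH : ∀ n, H n = ∫ x : ℝ, matrixPolyEval N (Pc n) n (x : ℂ) * W x *
        (matrixPolyEval N (Pc n) n (x : ℂ))ᴴ ∂μ)
    (hHpos : ∀ n, (H n).PosDef)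
    (T : Matrix (Fin N) (Fin N) ℂ)
    (hT : ∀ᵐ x ∂μ, T * W x = W x * Tᴴ) :
    ∀ n, T * H n = H n * Tᴴ := by
  intro n
  set P : ℝ → Matrix (Fin N) (Fin N) ℂ := fun x => matrixPolyEval N (Pc n) n (x : ℂ) with hP
  set f : ℝ → Matrix (Fin N) (Fin N) ℂ := fun x => P x * W x * (P x)ᴴ with hf
  -- Integrability of products of polynomials and W
  have hPint : ∀ a b : ℕ, @Integrable _ _ SeminormedAddGroup.toContinuousENorm _ _ (fun x : ℝ => matrixPolyEval N (Pc a) a (x : ℂ) * W x *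
      (matrixPolyEval N (Pc b) b (x : ℂ))ᴴ) μ := fun a b => by
    simpa [matrixPolyEval] using integrable_prod N μ W hmom (Pc a) (Pc b) (a + 1) (b + 1)
  have hfInt : @Integrable _ _ SeminormedAddGroup.toContinuousENorm _ _ f μ := hPint n n
  -- the "difference" polynomial D x = T P x - P x T, of degree < n
  set Dc : ℕ → Matrix (Fin N) (Fin N) ℂ := fun k => T * Pc n k - Pc n k * T with hDc
  set D : ℝ → Matrix (Fin N) (Fin N) ℂ := fun x => ∑ k ∈ Finset.range n, (x : ℂ) ^ k • Dc k
    with hD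
  have hD1 : ∀ x : ℝ, D x = T * P x - P x * T := by
    intro x
    have : T * P x - P x * T = ∑ k ∈ Finset.range (n + 1), (x : ℂ) ^ k • Dc k := by
      simp only [hP, matrixPolyEval, Finset.mul_sum, Finset.sum_mul, mul_smul_comm,
        smul_mul_assoc, hDc, smul_sub, Finset.sum_sub_distrib]
    rw [this, Finset.sum_range_succ, hDc]
    simp [hD, hDc, hmonic n]
  obtain ⟨B, hB⟩ := span_lemma N Pc hmonic n Dc
  have hDB : ∀ x : ℝ, D x = ∑ k ∈ Finset.range n, B k * matrixPolyEval N (Pc k) k (x : ℂ) :=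
    fun x => hB (x : ℂ)
  -- two vanishing integrals
  have heq1 : (fun x : ℝ => D x * W x * (P x)ᴴ)
      = fun x : ℝ => ∑ k ∈ Finset.range n,
        lrCLM N (B k) 1 (matrixPolyEval N (Pc k) k (x : ℂ) * W x * (P x)ᴴ) := by
    funext x
    rw [hDB x, Finset.sum_mul, Finset.sum_mul]
    exact Finset.sum_congr rfl fun k _ => by simp [mul_assoc]
  have hz1 : (∫ x : ℝ, D x * W x * (P x)ᴴ ∂μ) = 0 := by
    erw [heq1, integral_finset_sum _
      (fun k _ => (lrCLM N (B k) 1).integrable_comp (hPint k n))]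
    refine Finset.sum_eq_zero fun k hk => ?_
    rw [ContinuousLinearMap.integral_comp_comm (lrCLM N (B k) 1) (hPint k n),
      horth k n (Nat.ne_of_lt (Finset.mem_range.mp hk))]
    exact (lrCLM N (B k) 1).map_zero
  have heq2 : (fun x : ℝ => P x * W x * (D x)ᴴ)
      = fun x : ℝ => ∑ k ∈ Finset.range n,
        lrCLM N 1 ((B k)ᴴ) (P x * W x * (matrixPolyEval N (Pc k) k (x : ℂ))ᴴ) := by
    funext x
    rw [hDB x, Matrix.conjTranspose_sum, Finset.mul_sum]
    exact Finset.sum_congr rfl fun k _ => by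
      simp [Matrix.conjTranspose_mul, mul_assoc]
  have hz2 : (∫ x : ℝ, P x * W x * (D x)ᴴ ∂μ) = 0 := by
    erw [heq2, integral_finset_sum _
      (fun k _ => (lrCLM N 1 ((B k)ᴴ)).integrable_comp (hPint n k))]
    refine Finset.sum_eq_zero fun k hk => ?_
    rw [ContinuousLinearMap.integral_comp_comm (lrCLM N 1 ((B k)ᴴ)) (hPint n k),
      horth n k (Nat.ne_of_lt (Finset.mem_range.mp hk)).symm]
    exact (lrCLM N 1 ((B k)ᴴ)).map_zero
  -- integrability of the D-products
  have hint1 : @Integrable _ _ SeminormedAddGroup.toContinuousENorm _ _ (fun x : ℝ => D x * W x * (P x)ᴴ) μ := by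
    rw [heq1]
    exact integrable_finset_sum _ fun k _ =>
      (lrCLM N (B k) 1).integrable_comp (hPint k n)
  have hint2 : @Integrable _ _ SeminormedAddGroup.toContinuousENorm _ _ (fun x : ℝ => P x * W x * (D x)ᴴ) μ := by
    rw [heq2]
    exact integrable_finset_sum _ fun k _ =>
      (lrCLM N 1 ((B k)ᴴ)).integrable_comp (hPint n k)
  -- main computation
  have hTf : T * H n = ∫ x : ℝ, T * f x ∂μ := by
    have h := ContinuousLinearMap.integral_comp_comm (lrCLM N T 1) hfInt
    change ∫ x, T * f x * 1 ∂μ = T * (∫ x, f x ∂μ) * 1 at h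
    simp only [mul_one] at h
    rw [hH n, ← h]
  have hfT : H n * Tᴴ = ∫ x : ℝ, f x * Tᴴ ∂μ := by
    have h := ContinuousLinearMap.integral_comp_comm (lrCLM N 1 Tᴴ) hfInt
    change ∫ x, 1 * f x * Tᴴ ∂μ = 1 * (∫ x, f x ∂μ) * Tᴴ at h
    simp only [one_mul] at h
    rw [hH n, ← h]
  have hae : (fun x : ℝ => T * f x - f x * Tᴴ)
      =ᵐ[μ] fun x : ℝ => D x * W x * (P x)ᴴ - P x * W x * (D x)ᴴ := by
    filter_upwards [hT] with x hx
    have h5 : P x * T * W x = P x * W x * Tᴴ := by rw [mul_assoc, hx, ← mul_assoc]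
    rw [hD1 x]
    simp only [hf, Matrix.conjTranspose_sub, Matrix.conjTranspose_mul, sub_mul, mul_sub]
    rw [h5]
    noncomm_ring
  have hTfInt : @Integrable _ _ SeminormedAddGroup.toContinuousENorm _ _ (fun x : ℝ => T * f x) μ := by
    have := (lrCLM N T 1).integrable_comp hfInt
    convert this using 1
    funext x
    exact (mul_one (T * f x)).symm
  have hfTInt : @Integrable _ _ SeminormedAddGroup.toContinuousENorm _ _ (fun x : ℝ => f x * Tᴴ) μ := by
    have := (lrCLM N 1 Tᴴ).integrable_comp hfInt
    convert this using 1
    funext x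
    exact congrArg (· * Tᴴ) (one_mul (f x)).symm
  have key : T * H n - H n * Tᴴ = 0 := by
    rw [hTf, hfT, ← integral_sub hTfInt hfTInt, integral_congr_ae hae,
      integral_sub hint1 hint2, hz1, hz2, sub_zero]
  exact sub_eq_zero.mp key
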